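/- Let Q = Z_{q_1} × ⋯ × Z_{q_n} with 2 ≤ q_1 ≤ q_2 ≤ ⋯ ≤ q_n and with not all q_i equal, and let 1 ≤ t < k ≤ n. Then there does not exist a large set of mixed Steiner systems MS(t,k,Q). -/

import Mathlib

/-- A mixed Steiner system MS(t,k,Q) over the mixed alphabet described by `q : ι → ℕ`
(words are functions `x : ι → ℕ` with `x i < q i`): a set `C` of words of Hamming
weight `k` such that every word of Hamming weight `t` is at Hamming distance exactly
`k - t` from exactly one codeword, and distinct codewords are at Hamming distance at
least `2(k-t)+1`. -/
def IsMixedSteiner {ι : Type*} [Fintype ι] [DecidableEq ι] (q : ι → ℕ) (t k : ℕ)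
    (C : Set (ι → ℕ)) : Prop :=
  (∀ c ∈ C, (∀ i, c i < q i) ∧ hammingNorm c = k) ∧
  (∀ x : ι → ℕ, (∀ i, x i < q i) → hammingNorm x = t →
    ∃! c, c ∈ C ∧ hammingDist x c = k - t) ∧
  (∀ c ∈ C, ∀ c' ∈ C, c ≠ c' → 2 * (k - t) + 1 ≤ hammingDist c c')

/-- A large set of mixed Steiner systems MS(t,k,Q): a collection of pairwise
disjoint mixed Steiner systems MS(t,k,Q) whose union is the set of all words of
Hamming weight `k` over the mixed alphabet. -/
def IsLargeSet {ι : Type*} [Fintype ι] [DecidableEq ι] (q : ι → ℕ) (t k : ℕ)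
    (L : Set (Set (ι → ℕ))) : Prop :=
  (∀ C ∈ L, IsMixedSteiner q t k C) ∧
  L.PairwiseDisjoint id ∧
  ⋃₀ L = {x : ι → ℕ | (∀ i, x i < q i) ∧ hammingNorm x = k}

private lemma hammingNorm_eq' {n : ℕ} (c : Fin n → ℕ) :
    hammingNorm c = (Finset.univ.filter fun i => c i ≠ 0).card := rfl

private lemma hammingDist_eq' {n : ℕ} (x c : Fin n → ℕ) :
    hammingDist x c = (Finset.univ.filter fun i => x i ≠ c i).card := rfl

private lemma filter_comp_equiv_card {n : ℕ} (e : Fin n ≃ Fin n) (p : Fin n → Prop)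
    [DecidablePred p] :
    (Finset.univ.filter fun i => p (e i)).card = (Finset.univ.filter p).card :=
  Finset.card_bij' (fun i _ => e i) (fun j _ => e.symm j)
    (fun i hi => by simpa using (Finset.mem_filter.1 hi).2)
    (fun j hj => by simpa using (Finset.mem_filter.1 hj).2)
    (fun i _ => e.symm_apply_apply i) (fun j _ => e.apply_symm_apply j)

private lemma card_filter_val_mem {n : ℕ} (s : Finset ℕ) (hs : ∀ x ∈ s, x < n) :
    (Finset.univ.filter fun i : Fin n => (i : ℕ) ∈ s).card = s.card :=
  Finset.card_bij' (fun i _ => (i : ℕ)) (fun x hx => ⟨x, hs x hx⟩)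
    (fun i hi => (Finset.mem_filter.1 hi).2)
    (fun x hx => Finset.mem_filter.2 ⟨Finset.mem_univ _, hx⟩)
    (fun i _ => rfl) (fun x _ => rfl)

private lemma key_agree {n t k : ℕ} (htk : t ≤ k) {x c : Fin n → ℕ}
    (hx : hammingNorm x = t) (hc : hammingNorm c = k)
    (hd : hammingDist x c = k - t) {i : Fin n} (hi : x i ≠ 0) : c i = x i := by
  classical
  rw [hammingNorm_eq'] at hx hc
  rw [hammingDist_eq'] at hd
  set X := Finset.univ.filter fun j : Fin n => x j ≠ 0 with hX
  set D := Finset.univ.filter fun j : Fin n => x j ≠ c j with hD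
  have hsub : (Finset.univ.filter fun j : Fin n => c j ≠ 0) ⊆ (X \ D) ∪ D := by
    intro j hj
    have hcj : c j ≠ 0 := (Finset.mem_filter.1 hj).2
    by_cases h : x j = c j
    · exact Finset.mem_union_left _ (Finset.mem_sdiff.2
        ⟨Finset.mem_filter.2 ⟨Finset.mem_univ _, h ▸ hcj⟩,
         fun hm => (Finset.mem_filter.1 hm).2 h⟩)
    · exact Finset.mem_union_right _ (Finset.mem_filter.2 ⟨Finset.mem_univ _, h⟩)
  have hcard : k ≤ (X \ D).card + (k - t) := by
    have h1 := Finset.card_le_card hsub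
    have h2 := Finset.card_union_le (X \ D) D
    omega
  have hXD : X \ D = X := by
    apply Finset.eq_of_subset_of_card_le (Finset.sdiff_subset)
    omega
  have hiX : i ∈ X := Finset.mem_filter.2 ⟨Finset.mem_univ _, hi⟩
  have : i ∉ D := (Finset.mem_sdiff.1 (hXD ▸ hiX)).2
  have := fun h => this (Finset.mem_filter.2 ⟨Finset.mem_univ _, h⟩)
  exact (not_not.1 this).symm

theorem stmt14 {n : ℕ} (q : Fin n → ℕ) (hq2 : ∀ i, 2 ≤ q i) (hmono : Monotone q)
    (hne : ∃ i j, q i ≠ q j) (t k : ℕ) (ht : 1 ≤ t) (htk : t < k) (hkn : k ≤ n) :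
    ¬∃ L : Set (Set (Fin n → ℕ)), IsLargeSet q t k L := by
  classical
  rintro ⟨L, hMS, hdisj, hunion⟩
  have hn0 : 0 < n := by omega
  set a : Fin n := ⟨0, hn0⟩ with ha
  set b : Fin n := ⟨n - 1, by omega⟩ with hb
  have hab : a ≠ b := by
    simp only [ha, hb, ne_eq, Fin.mk.injEq]
    omega
  have hale : a ≤ b := by
    rw [ha, hb, Fin.le_def]; exact Nat.zero_le _
  have hqab : q a < q b := by
    rcases lt_or_eq_of_le (hmono hale) with h | h
    · exact h
    · exfalso
      obtain ⟨i, j, hij⟩ := hne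
      have key : ∀ i : Fin n, q i = q a := by
        intro i
        have h1 : a ≤ i := by rw [ha, Fin.le_def]; exact Nat.zero_le _
        have h2 : i ≤ b := by
          rw [hb, Fin.le_def]; have := i.isLt; simp only; omega
        exact le_antisymm (h ▸ hmono h2) (hmono h1)
      exact hij (by rw [key i, key j])
  -- the two weight-t words
  set e : Fin n ≃ Fin n := Equiv.swap a b with he
  set xw : Fin n → ℕ := fun i => if (i : ℕ) < t then 1 else 0 with hxw
  set yw : Fin n → ℕ := fun i => xw (e i) with hyw
  have hx01 : ∀ i, xw i = 0 ∨ xw i = 1 := by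
    intro i; rw [hxw]; dsimp only; split <;> simp
  have hxb : ∀ i, xw i < q i := by
    intro i; rcases hx01 i with h | h <;> rw [h] <;> have := hq2 i <;> omega
  have hyb : ∀ i, yw i < q i := by
    intro i
    rcases hx01 (e i) with h | h <;> rw [hyw] <;> dsimp only <;> rw [h] <;>
      have := hq2 i <;> omega
  have hxn : hammingNorm xw = t := by
    rw [hammingNorm_eq']
    have hfe : (Finset.univ.filter fun i : Fin n => xw i ≠ 0)
        = Finset.univ.filter fun i : Fin n => (i : ℕ) ∈ Finset.range t := by
      apply Finset.filter_congr
      intro i _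
      rw [hxw]
      dsimp only
      constructor
      · intro hne'
        by_contra h
        simp only [Finset.mem_range] at h
        simp [if_neg h] at hne'
      · intro hm
        simp only [Finset.mem_range] at hm
        simp [if_pos hm]
    rw [hfe, card_filter_val_mem _ (fun x hx => by
      simp only [Finset.mem_range] at hx; omega), Finset.card_range]
  have hyn : hammingNorm yw = t := by
    rw [hammingNorm_eq']
    have : (Finset.univ.filter fun i : Fin n => yw i ≠ 0).card
        = (Finset.univ.filter fun i : Fin n => xw i ≠ 0).card := by
      rw [hyw]
      exact filter_comp_equiv_card e (fun j => xw j ≠ 0)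
    rw [this, ← hammingNorm_eq', hxn]
  -- the sets we count
  set F : (Fin n → ℕ) → Set (Fin n → ℕ) := fun z =>
    {c | (∀ i, c i < q i) ∧ hammingNorm c = k ∧ hammingDist z c = k - t} with hF
  have hFin : ∀ z, (F z).Finite := by
    intro z
    apply Set.Finite.subset (Set.Finite.pi (fun i : Fin n => Set.finite_Iio (q i)))
    intro c hc
    exact fun i _ => hc.1 i
  have hmemU : ∀ c : Fin n → ℕ, (∀ i, c i < q i) → hammingNorm c = k →
      ∃ C, C ∈ L ∧ c ∈ C := by
    intro c hcb hcn
    have : c ∈ ⋃₀ L := by rw [hunion]; exact ⟨hcb, hcn⟩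
    exact Set.mem_sUnion.1 this
  have hsysu : ∀ C ∈ L, ∀ C' ∈ L, ∀ c : Fin n → ℕ, c ∈ C → c ∈ C' → C = C' := by
    intro C hC C' hC' c hc hc'
    exact hdisj.elim hC hC' (fun hd => Set.not_disjoint_iff.2 ⟨c, hc, hc'⟩ hd)
  -- |F z| = |F z'| for any two weight-t words, via the large set
  have step : ∀ z z' : Fin n → ℕ, (∀ i, z i < q i) → hammingNorm z = t →
      (∀ i, z' i < q i) → hammingNorm z' = t → (F z).ncard ≤ (F z').ncard := by
    intro z z' hzb hzn hz'b hz'n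
    set ψ : (Fin n → ℕ) → (Fin n → ℕ) := fun c =>
      if h : ∃ C, C ∈ L ∧ c ∈ C then
        ((hMS h.choose h.choose_spec.1).2.1 z' hz'b hz'n).exists.choose
      else 0 with hψdef
    have hψ : ∀ c ∈ F z, (ψ c ∈ F z') ∧
        ∀ C ∈ L, c ∈ C → (ψ c ∈ C ∧ hammingDist z' (ψ c) = k - t) := by
      intro c hc
      have hex : ∃ C, C ∈ L ∧ c ∈ C := hmemU c hc.1 hc.2.1
      have hCL := hex.choose_spec.1
      have hspec := ((hMS hex.choose hCL).2.1 z' hz'b hz'n).exists.choose_spec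
      rw [hψdef]
      simp only [dif_pos hex]
      refine ⟨⟨((hMS _ hCL).1 _ hspec.1).1, ((hMS _ hCL).1 _ hspec.1).2, hspec.2⟩, ?_⟩
      intro C hC hcC
      have hCe : C = hex.choose := hsysu C hC hex.choose hCL c hcC hex.choose_spec.2
      rw [hCe]
      exact hspec
    have hinj : Set.InjOn ψ (F z) := by
      intro c1 h1 c2 h2 heq
      obtain ⟨C1, hC1, hc1⟩ := hmemU c1 h1.1 h1.2.1
      obtain ⟨C2, hC2, hc2⟩ := hmemU c2 h2.1 h2.2.1
      have p1 := (hψ c1 h1).2 C1 hC1 hc1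
      have p2 := (hψ c2 h2).2 C2 hC2 hc2
      have hCC : C1 = C2 := hsysu C1 hC1 C2 hC2 (ψ c1) p1.1 (heq ▸ p2.1)
      subst hCC
      exact ((hMS C1 hC1).2.1 z hzb hzn).unique ⟨hc1, h1.2.2⟩ ⟨hc2, h2.2.2⟩
    calc (F z).ncard = (ψ '' F z).ncard := (Set.ncard_image_of_injOn hinj).symm
      _ ≤ (F z').ncard := Set.ncard_le_ncard
          (fun d hd => by obtain ⟨c, hc, rfl⟩ := hd; exact (hψ c hc).1) (hFin z')
  have hcard_eq : (F xw).ncard = (F yw).ncard :=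
    le_antisymm (step xw yw hxb hxn hyb hyn) (step yw xw hyb hyn hxb hxn)
  -- the special codeword
  set cs : Fin n → ℕ := fun i => if (i : ℕ) < k - 1 then 1 else if i = b then q b - 1 else 0
    with hcs
  have hcsb : cs ∈ F xw := by
    refine ⟨?_, ?_, ?_⟩
    · intro i
      rw [hcs]; dsimp only
      split
      · have := hq2 i; omega
      · split
        · next h' => rw [h']; have := hq2 b; omega
        · have := hq2 i; omega
    · rw [hammingNorm_eq']
      have hfe : (Finset.univ.filter fun i : Fin n => cs i ≠ 0)
          = Finset.univ.filter fun i : Fin n =>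
              (i : ℕ) ∈ insert (n - 1) (Finset.range (k - 1)) := by
        apply Finset.filter_congr
        intro i _
        rw [hcs]; dsimp only
        simp only [Finset.mem_insert, Finset.mem_range]
        constructor
        · intro hne'
          by_cases h1 : (i : ℕ) < k - 1
          · exact Or.inr h1
          · rw [if_neg h1] at hne'
            by_cases h2 : i = b
            · left; rw [h2, hb]
            · rw [if_neg h2] at hne'; exact absurd rfl hne'
        · intro hm
          rcases hm with hm | hm
          · have h1 : ¬ (i : ℕ) < k - 1 := by omega
            have h2 : i = b := by rw [hb]; exact Fin.ext (by simpa using hm)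
            rw [if_neg h1, if_pos h2]
            have := hq2 b; omega
          · rw [if_pos hm]; omega
      rw [hfe, card_filter_val_mem, Finset.card_insert_of_notMem, Finset.card_range]
      · omega
      · simp only [Finset.mem_range]; omega
      · intro v hv
        simp only [Finset.mem_insert, Finset.mem_range] at hv
        omega
    · rw [hammingDist_eq']
      have hfe : (Finset.univ.filter fun i : Fin n => xw i ≠ cs i)
          = Finset.univ.filter fun i : Fin n =>
              (i : ℕ) ∈ insert (n - 1) (Finset.Ico t (k - 1)) := by
        apply Finset.filter_congr
        intro i _
        rw [hcs, hxw]; dsimp only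
        simp only [Finset.mem_insert, Finset.mem_Ico]
        constructor
        · intro hne'
          by_cases h0 : (i : ℕ) < t
          · rw [if_pos h0, if_pos (by omega : (i : ℕ) < k - 1)] at hne'
            exact absurd rfl hne'
          · by_cases h1 : (i : ℕ) < k - 1
            · exact Or.inr ⟨by omega, h1⟩
            · rw [if_neg h0, if_neg h1] at hne'
              by_cases h2 : i = b
              · left; rw [h2, hb]
              · rw [if_neg h2] at hne'; exact absurd rfl hne'
        · intro hm
          rcases hm with hm | hm
          · have h0 : ¬ (i : ℕ) < t := by omega
            have h1 : ¬ (i : ℕ) < k - 1 := by omega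
            have h2 : i = b := by rw [hb]; exact Fin.ext (by simpa using hm)
            rw [if_neg h0, if_neg h1, if_pos h2]
            have := hq2 b; omega
          · rw [if_neg (by omega : ¬ (i : ℕ) < t), if_pos hm.2]
            omega
      rw [hfe, card_filter_val_mem, Finset.card_insert_of_notMem, Nat.card_Ico]
      · omega
      · simp only [Finset.mem_Ico]; omega
      · intro v hv
        simp only [Finset.mem_insert, Finset.mem_Ico] at hv
        omega
  -- the injection from F yw into F xw avoiding cs
  set φ : (Fin n → ℕ) → (Fin n → ℕ) := fun c => fun i => c (e i) with hφ
  have hxyw : ∀ i, xw i = yw (e i) := by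
    intro i
    rw [hyw]; dsimp only
    rw [he, Equiv.swap_apply_self]
  have himg : ∀ c ∈ F yw, φ c ∈ F xw ∧ φ c ≠ cs := by
    intro c hc
    have hcb1 : c b = 1 := by
      have hyb1 : yw b = 1 := by
        rw [hyw]; dsimp only
        rw [he, Equiv.swap_apply_right, hxw]
        simp only [ha]
        rw [if_pos (show 0 < t by omega)]
      have := key_agree (le_of_lt htk) hyn hc.2.1 hc.2.2 (i := b) (by rw [hyb1]; omega)
      rw [this, hyb1]
    have hbnds : ∀ i, φ c i < q i := by
      intro i
      rw [hφ]; dsimp only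
      by_cases h1 : i = a
      · rw [h1, he, Equiv.swap_apply_left, hcb1]
        have := hq2 a; omega
      · by_cases h2 : i = b
        · rw [h2, he, Equiv.swap_apply_right]
          exact lt_of_lt_of_le (hc.1 a) (hmono hale)
        · rw [he, Equiv.swap_apply_of_ne_of_ne h1 h2]
          exact hc.1 i
    refine ⟨⟨hbnds, ?_, ?_⟩, ?_⟩
    · show hammingNorm (fun i => c (e i)) = k
      rw [hammingNorm_eq' (fun i => c (e i)),
        filter_comp_equiv_card e (fun j => c j ≠ 0), ← hammingNorm_eq']
      exact hc.2.1
    · rw [hammingDist_eq']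
      have hfe : (Finset.univ.filter fun i : Fin n => xw i ≠ φ c i)
          = Finset.univ.filter fun i : Fin n => yw (e i) ≠ c (e i) := by
        apply Finset.filter_congr
        intro i _
        rw [hφ, hxyw i]
      rw [hfe, filter_comp_equiv_card e (fun j => yw j ≠ c j), ← hammingDist_eq']
      exact hc.2.2
    · intro hEq
      have hval : φ c b = cs b := by rw [hEq]
      rw [hφ, hcs] at hval
      dsimp only at hval
      rw [he, Equiv.swap_apply_right] at hval
      rw [if_neg (by simp only [hb]; omega : ¬ ((b : Fin n) : ℕ) < k - 1),
        if_pos rfl] at hval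
      have hca : c a < q a := hc.1 a
      omega
  have himgsub : φ '' (F yw) ⊆ F xw \ {cs} := by
    rintro d ⟨c, hc, rfl⟩
    exact ⟨(himg c hc).1, (himg c hc).2⟩
  have hφinj : Set.InjOn φ (F yw) := by
    intro c1 _ c2 _ heq
    funext j
    have := congrFun heq (e.symm j)
    rw [hφ] at this
    dsimp only at this
    rwa [Equiv.apply_symm_apply] at this
  have hlt : (F xw).ncard < (F xw).ncard := by
    calc (F xw).ncard = (F yw).ncard := hcard_eq
      _ = (φ '' F yw).ncard := (Set.ncard_image_of_injOn hφinj).symm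
      _ ≤ (F xw \ {cs}).ncard := Set.ncard_le_ncard himgsub ((hFin xw).diff)
      _ < (F xw).ncard := Set.ncard_diff_singleton_lt_of_mem hcsb (hFin xw)
  omega
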